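/- Let A ⊆ ℝ^m be compact satisfying dist(ξ, conv A) = dist(ξ, A) for all ξ ∉ conv A (Euclidean distance), let 1 ≤ q ≤ ∞, p ≥ 1, and define W(ξ,ζ) = dist_q^p((ξ,ζ), A × A) using the q-product norm. Then the separately convex envelope W^sc coincides with the convex envelope W^co, and is given by: W^sc(ξ,ζ) = 0 if ξ, ζ ∈ conv A; W^sc(ξ,ζ) = W(ξ,ζ) if ξ, ζ ∉ conv A; W^sc(ξ,ζ) = W(α,ζ) for any α ∈ A if ξ ∈ conv A, ζ ∉ conv A; and W^sc(ξ,ζ) = W(ξ,β) for any β ∈ A if ξ ∉ conv A, ζ ∈ conv A. -/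
import Mathlib

open Set
open scoped ENNReal

/-- Distance of a point to a set, measured via the gauge `N`. -/
noncomputable def distTo {V : Type*} [AddCommGroup V] [Module ℝ V]
    (N : V → ℝ) (K : Set V) (x : V) : ℝ :=
  sInf ((fun k => N (x - k)) '' K)

/-- `g` is the convex envelope of `W`. -/
def IsConvexEnv {V : Type*} [AddCommGroup V] [Module ℝ V] (W g : V → ℝ) : Prop :=
  ConvexOn ℝ Set.univ g ∧ g ≤ W ∧
    ∀ h : V → ℝ, ConvexOn ℝ Set.univ h → h ≤ W → h ≤ g

def SepConvexFn {V : Type*} [AddCommGroup V] [Module ℝ V] (f : V × V → ℝ) : Prop :=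
  (∀ ξ : V, ConvexOn ℝ Set.univ fun ζ => f (ξ, ζ)) ∧
    (∀ ζ : V, ConvexOn ℝ Set.univ fun ξ => f (ξ, ζ))

/-- `g` is the separately convex envelope of `W`. -/
def IsSepConvexEnv {V : Type*} [AddCommGroup V] [Module ℝ V]
    (W g : V × V → ℝ) : Prop :=
  SepConvexFn g ∧ g ≤ W ∧
    ∀ h : V × V → ℝ, SepConvexFn h → h ≤ W → h ≤ g

section Aux

variable {V : Type*} [AddCommGroup V] [Module ℝ V]

lemma distTo_nonneg (N : V → ℝ) (h0 : ∀ v, 0 ≤ N v) (K : Set V) (x : V) :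
    0 ≤ distTo N K x :=
  Real.sInf_nonneg (by rintro b ⟨k, -, rfl⟩; exact h0 _)

lemma distTo_le (N : V → ℝ) (h0 : ∀ v, 0 ≤ N v) {K : Set V} {k : V} (hk : k ∈ K) (x : V) :
    distTo N K x ≤ N (x - k) :=
  csInf_le ⟨0, by rintro b ⟨k', -, rfl⟩; exact h0 _⟩ ⟨k, hk, rfl⟩

lemma le_distTo (N : V → ℝ) {K : Set V} (hK : K.Nonempty) {x : V} {c : ℝ}
    (h : ∀ k ∈ K, c ≤ N (x - k)) : c ≤ distTo N K x :=
  le_csInf (hK.image _) (by rintro b ⟨k, hk, rfl⟩; exact h k hk)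

lemma distTo_lt (N : V → ℝ) {K : Set V} (hK : K.Nonempty) (x : V) {ε : ℝ} (hε : 0 < ε) :
    ∃ k ∈ K, N (x - k) < distTo N K x + ε := by
  obtain ⟨b, hb, hlt⟩ := Real.lt_sInf_add_pos (hK.image _) hε
  obtain ⟨k, hk, rfl⟩ := hb
  exact ⟨k, hk, hlt⟩

lemma eps_le {a b : ℝ} (h : ∀ ε : ℝ, 0 < ε → a ≤ b + ε) : a ≤ b := by
  by_contra hc
  push_neg at hc
  have := h ((a - b) / 2) (by linarith)
  linarith

lemma centerMass_le_of_le {ι : Type} (t : Finset ι) (w v : ι → ℝ) {c : ℝ}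
    (h0 : ∀ i ∈ t, 0 ≤ w i) (h1 : ∑ i ∈ t, w i = 1) (hv : ∀ i ∈ t, v i ≤ c) :
    t.centerMass w v ≤ c := by
  rw [Finset.centerMass_eq_of_sum_1 _ _ h1]
  calc ∑ i ∈ t, w i • v i ≤ ∑ i ∈ t, w i • c :=
        Finset.sum_le_sum fun i hi => smul_le_smul_of_nonneg_left (hv i hi) (h0 i hi)
    _ = c := by rw [← Finset.sum_smul, h1, one_smul]

lemma centerMass_add_const {ι : Type} (t : Finset ι) (w : ι → ℝ) (z : ι → V) (u : V)
    (h1 : ∑ i ∈ t, w i = 1) :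
    t.centerMass w (fun i => z i + u) = t.centerMass w z + u := by
  rw [Finset.centerMass_eq_of_sum_1 _ _ h1, Finset.centerMass_eq_of_sum_1 _ _ h1]
  simp only [smul_add, Finset.sum_add_distrib, ← Finset.sum_smul, h1, one_smul]

end Aux

theorem stmt18 {m : ℕ}
    (A : Set (EuclideanSpace ℝ (Fin m))) (hAne : A.Nonempty) (hAc : IsCompact A)
    (hdist : ∀ ξ : EuclideanSpace ℝ (Fin m), ξ ∉ convexHull ℝ A →
      Metric.infDist ξ (convexHull ℝ A) = Metric.infDist ξ A)
    (q : ℝ≥0∞) (hq : 1 ≤ q) (p : ℝ) (hp : 1 ≤ p)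
    (Nq : EuclideanSpace ℝ (Fin m) × EuclideanSpace ℝ (Fin m) → ℝ)
    (hNq₁ : q ≠ ⊤ → ∀ z, Nq z = (‖z.1‖ ^ q.toReal + ‖z.2‖ ^ q.toReal) ^ (1 / q.toReal))
    (hNq₂ : q = ⊤ → ∀ z, Nq z = max ‖z.1‖ ‖z.2‖)
    (W : EuclideanSpace ℝ (Fin m) × EuclideanSpace ℝ (Fin m) → ℝ)
    (hW : ∀ z, W z = distTo Nq (A ×ˢ A) z ^ p) :
    ∃ g : EuclideanSpace ℝ (Fin m) × EuclideanSpace ℝ (Fin m) → ℝ,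
      IsSepConvexEnv W g ∧ IsConvexEnv W g ∧
      (∀ ξ ζ, ξ ∈ convexHull ℝ A → ζ ∈ convexHull ℝ A → g (ξ, ζ) = 0) ∧
      (∀ ξ ζ, ξ ∉ convexHull ℝ A → ζ ∉ convexHull ℝ A → g (ξ, ζ) = W (ξ, ζ)) ∧
      (∀ ξ ζ α, ξ ∈ convexHull ℝ A → ζ ∉ convexHull ℝ A → α ∈ A →
        g (ξ, ζ) = W (α, ζ)) ∧
      (∀ ξ ζ β, ξ ∉ convexHull ℝ A → ζ ∈ convexHull ℝ A → β ∈ A →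
        g (ξ, ζ) = W (ξ, β)) := by
  classical
  haveI : Fact (1 ≤ q) := ⟨hq⟩
  have hq0 : q ≠ 0 := (zero_lt_one.trans_le hq).ne'
  have hp0 : 0 ≤ p := zero_le_one.trans hp
  have hp0' : p ≠ 0 := (zero_lt_one.trans_le hp).ne'
  have hqt' : q ≠ ⊤ → 0 < q.toReal := fun h => ENNReal.toReal_pos hq0 h
  -- `Nq` is the norm of the `WithLp` product
  have hN : ∀ z, Nq z = ‖(WithLp.equiv q
      (EuclideanSpace ℝ (Fin m) × EuclideanSpace ℝ (Fin m))).symm z‖ := by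
    intro z
    rcases eq_or_ne q ⊤ with hqt | hqt
    · rw [hNq₂ hqt z]; subst hqt; rw [WithLp.prod_norm_eq_sup]; rfl
    · rw [hNq₁ hqt z, WithLp.prod_norm_eq_add (hqt' hqt)]; rfl
  have hN0 : ∀ z, 0 ≤ Nq z := fun z => by rw [hN z]; exact norm_nonneg _
  have hNtri : ∀ x y, Nq (x + y) ≤ Nq x + Nq y := by
    intro x y; rw [hN, hN, hN]; exact norm_add_le _ _
  have hNsmul : ∀ t : ℝ, 0 ≤ t → ∀ x, Nq (t • x) = t * Nq x := by
    intro t ht x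
    rw [hN, hN, show (WithLp.equiv q _).symm (t • x) = t • (WithLp.equiv q _).symm x from rfl,
      norm_smul, Real.norm_eq_abs, abs_of_nonneg ht]
  -- monotonicity and special values
  have hmono : ∀ u u' w w' : EuclideanSpace ℝ (Fin m), ‖u'‖ ≤ ‖u‖ → ‖w'‖ ≤ ‖w‖ →
      Nq (u', w') ≤ Nq (u, w) := by
    intro u u' w w' hu hw
    rcases eq_or_ne q ⊤ with hqt | hqt
    · rw [hNq₂ hqt, hNq₂ hqt]; exact max_le_max hu hw
    · rw [hNq₁ hqt, hNq₁ hqt]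
      exact Real.rpow_le_rpow (by positivity)
        (add_le_add (Real.rpow_le_rpow (norm_nonneg _) hu (hqt' hqt).le)
          (Real.rpow_le_rpow (norm_nonneg _) hw (hqt' hqt).le)) (by positivity)
  have hNzw : ∀ w : EuclideanSpace ℝ (Fin m), Nq (0, w) = ‖w‖ := by
    intro w
    rcases eq_or_ne q ⊤ with hqt | hqt
    · rw [hNq₂ hqt]; simp
    · rw [hNq₁ hqt]
      simp only [norm_zero]
      rw [Real.zero_rpow (hqt' hqt).ne', zero_add, ← Real.rpow_mul (norm_nonneg w),
        mul_one_div_cancel (hqt' hqt).ne', Real.rpow_one]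
  have hNwz : ∀ u : EuclideanSpace ℝ (Fin m), Nq (u, 0) = ‖u‖ := by
    intro u
    rcases eq_or_ne q ⊤ with hqt | hqt
    · rw [hNq₂ hqt]; simp
    · rw [hNq₁ hqt]
      simp only [norm_zero]
      rw [Real.zero_rpow (hqt' hqt).ne', add_zero, ← Real.rpow_mul (norm_nonneg u),
        mul_one_div_cancel (hqt' hqt).ne', Real.rpow_one]
  have hge2 : ∀ u w : EuclideanSpace ℝ (Fin m), ‖w‖ ≤ Nq (u, w) := by
    intro u w
    rw [← hNzw w]
    exact hmono u 0 w w (by simp) le_rfl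
  have hge1 : ∀ u w : EuclideanSpace ℝ (Fin m), ‖u‖ ≤ Nq (u, w) := by
    intro u w
    rw [← hNwz u]
    exact hmono u u w 0 le_rfl (by simp)
  -- the sets
  set C : Set (EuclideanSpace ℝ (Fin m)) := convexHull ℝ A with hC
  have hAC : A ⊆ C := subset_convexHull ℝ A
  have hCne : C.Nonempty := hAne.mono hAC
  have hCconv : Convex ℝ C := convex_convexHull ℝ A
  set K2 : Set (EuclideanSpace ℝ (Fin m) × EuclideanSpace ℝ (Fin m)) := C ×ˢ C with hK2
  have hK2ne : K2.Nonempty := hCne.prod hCne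
  have hK2conv : Convex ℝ K2 := hCconv.prod hCconv
  set AA : Set (EuclideanSpace ℝ (Fin m) × EuclideanSpace ℝ (Fin m)) := A ×ˢ A with hAA
  have hAAne : AA.Nonempty := hAne.prod hAne
  have hsub : AA ⊆ K2 := Set.prod_mono hAC hAC
  set d := distTo Nq K2 with hd
  set dW := distTo Nq AA with hdWd
  have hd0 : ∀ z, 0 ≤ d z := distTo_nonneg Nq hN0 K2
  have hdW0 : ∀ z, 0 ≤ dW z := distTo_nonneg Nq hN0 AA
  have hWd : ∀ z, W z = dW z ^ p := hW
  -- nearest point projection onto A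
  have hnear : ∀ x : EuclideanSpace ℝ (Fin m), x ∉ C → ∀ k ∈ C, ∃ a ∈ A, ‖x - a‖ ≤ ‖x - k‖ := by
    intro x hx k hk
    obtain ⟨a, ha, hda⟩ := hAc.exists_infDist_eq_dist hAne x
    refine ⟨a, ha, ?_⟩
    rw [← dist_eq_norm, ← dist_eq_norm, ← hda, ← hdist x hx]
    exact Metric.infDist_le_dist_of_mem hk
  -- region computations
  have hdzero : ∀ ξ ζ, ξ ∈ C → ζ ∈ C → d (ξ, ζ) = 0 := by
    intro ξ ζ hξ hζ
    refine le_antisymm ?_ (hd0 _)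
    have h00 : Nq ((ξ, ζ) - (ξ, ζ)) = 0 := by
      rw [sub_self, show (0 : EuclideanSpace ℝ (Fin m) × EuclideanSpace ℝ (Fin m)) =
        ((0 : EuclideanSpace ℝ (Fin m)), (0 : EuclideanSpace ℝ (Fin m))) from rfl, hNzw,
        norm_zero]
    calc d (ξ, ζ) ≤ Nq ((ξ, ζ) - (ξ, ζ)) := distTo_le Nq hN0 (show (ξ, ζ) ∈ K2 from ⟨hξ, hζ⟩) _
      _ = 0 := h00
  have hdled : ∀ z, d z ≤ dW z := fun z =>
    le_distTo Nq hAAne fun k hk => distTo_le Nq hN0 (hsub hk) z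
  have hdout : ∀ ξ ζ, ξ ∉ C → ζ ∉ C → d (ξ, ζ) = dW (ξ, ζ) := by
    intro ξ ζ hξ hζ
    refine le_antisymm (hdled _) ?_
    refine le_distTo Nq hK2ne ?_
    rintro ⟨k1, k2⟩ ⟨hk1, hk2⟩
    obtain ⟨a, ha, hia⟩ := hnear ξ hξ k1 hk1
    obtain ⟨b, hb, hib⟩ := hnear ζ hζ k2 hk2
    calc dW (ξ, ζ) ≤ Nq ((ξ, ζ) - (a, b)) :=
          distTo_le Nq hN0 (show ((a : EuclideanSpace ℝ (Fin m)), b) ∈ AA from ⟨ha, hb⟩) _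
      _ = Nq (ξ - a, ζ - b) := by rw [Prod.mk_sub_mk]
      _ ≤ Nq (ξ - k1, ζ - k2) := hmono _ _ _ _ hia hib
      _ = Nq ((ξ, ζ) - (k1, k2)) := by rw [Prod.mk_sub_mk]
  have hdmixd : ∀ ξ ζ, ξ ∈ C → ζ ∉ C → d (ξ, ζ) = Metric.infDist ζ A := by
    intro ξ ζ hξ hζ
    obtain ⟨b, hb, hdb⟩ := hAc.exists_infDist_eq_dist hAne ζ
    refine le_antisymm ?_ ?_
    · calc d (ξ, ζ) ≤ Nq ((ξ, ζ) - (ξ, b)) :=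
            distTo_le Nq hN0 (show ((ξ : EuclideanSpace ℝ (Fin m)), b) ∈ K2
              from ⟨hξ, hAC hb⟩) _
        _ = Nq (0, ζ - b) := by rw [Prod.mk_sub_mk, sub_self]
        _ = ‖ζ - b‖ := hNzw _
        _ = Metric.infDist ζ A := by rw [← dist_eq_norm, ← hdb]
    · refine le_distTo Nq hK2ne ?_
      rintro ⟨k1, k2⟩ ⟨hk1, hk2⟩
      calc Metric.infDist ζ A = Metric.infDist ζ C := (hdist ζ hζ).symm
        _ ≤ dist ζ k2 := Metric.infDist_le_dist_of_mem hk2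
        _ = ‖ζ - k2‖ := dist_eq_norm _ _
        _ ≤ Nq (ξ - k1, ζ - k2) := hge2 _ _
        _ = Nq ((ξ, ζ) - (k1, k2)) := by rw [Prod.mk_sub_mk]
  have hdmixd' : ∀ ξ ζ, ξ ∉ C → ζ ∈ C → d (ξ, ζ) = Metric.infDist ξ A := by
    intro ξ ζ hξ hζ
    obtain ⟨b, hb, hdb⟩ := hAc.exists_infDist_eq_dist hAne ξ
    refine le_antisymm ?_ ?_
    · calc d (ξ, ζ) ≤ Nq ((ξ, ζ) - (b, ζ)) :=
            distTo_le Nq hN0 (show ((b : EuclideanSpace ℝ (Fin m)), ζ) ∈ K2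
              from ⟨hAC hb, hζ⟩) _
        _ = Nq (ξ - b, 0) := by rw [Prod.mk_sub_mk, sub_self]
        _ = ‖ξ - b‖ := hNwz _
        _ = Metric.infDist ξ A := by rw [← dist_eq_norm, ← hdb]
    · refine le_distTo Nq hK2ne ?_
      rintro ⟨k1, k2⟩ ⟨hk1, hk2⟩
      calc Metric.infDist ξ A = Metric.infDist ξ C := (hdist ξ hξ).symm
        _ ≤ dist ξ k1 := Metric.infDist_le_dist_of_mem hk1
        _ = ‖ξ - k1‖ := dist_eq_norm _ _
        _ ≤ Nq (ξ - k1, ζ - k2) := hge1 _ _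
        _ = Nq ((ξ, ζ) - (k1, k2)) := by rw [Prod.mk_sub_mk]
  have hdWmix : ∀ α ζ, α ∈ A → dW (α, ζ) = Metric.infDist ζ A := by
    intro α ζ hα
    obtain ⟨b, hb, hdb⟩ := hAc.exists_infDist_eq_dist hAne ζ
    refine le_antisymm ?_ ?_
    · calc dW (α, ζ) ≤ Nq ((α, ζ) - (α, b)) :=
            distTo_le Nq hN0 (show ((α : EuclideanSpace ℝ (Fin m)), b) ∈ AA from ⟨hα, hb⟩) _
        _ = Nq (0, ζ - b) := by rw [Prod.mk_sub_mk, sub_self]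
        _ = ‖ζ - b‖ := hNzw _
        _ = Metric.infDist ζ A := by rw [← dist_eq_norm, ← hdb]
    · refine le_distTo Nq hAAne ?_
      rintro ⟨a1, a2⟩ ⟨ha1, ha2⟩
      calc Metric.infDist ζ A ≤ dist ζ a2 := Metric.infDist_le_dist_of_mem ha2
        _ = ‖ζ - a2‖ := dist_eq_norm _ _
        _ ≤ Nq (α - a1, ζ - a2) := hge2 _ _
        _ = Nq ((α, ζ) - (a1, a2)) := by rw [Prod.mk_sub_mk]
  have hdWmix' : ∀ ξ β, β ∈ A → dW (ξ, β) = Metric.infDist ξ A := by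
    intro ξ β hβ
    obtain ⟨b, hb, hdb⟩ := hAc.exists_infDist_eq_dist hAne ξ
    refine le_antisymm ?_ ?_
    · calc dW (ξ, β) ≤ Nq ((ξ, β) - (b, β)) :=
            distTo_le Nq hN0 (show ((b : EuclideanSpace ℝ (Fin m)), β) ∈ AA from ⟨hb, hβ⟩) _
        _ = Nq (ξ - b, 0) := by rw [Prod.mk_sub_mk, sub_self]
        _ = ‖ξ - b‖ := hNwz _
        _ = Metric.infDist ξ A := by rw [← dist_eq_norm, ← hdb]
    · refine le_distTo Nq hAAne ?_
      rintro ⟨a1, a2⟩ ⟨ha1, ha2⟩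
      calc Metric.infDist ξ A ≤ dist ξ a1 := Metric.infDist_le_dist_of_mem ha1
        _ = ‖ξ - a1‖ := dist_eq_norm _ _
        _ ≤ Nq (ξ - a1, β - a2) := hge1 _ _
        _ = Nq ((ξ, β) - (a1, a2)) := by rw [Prod.mk_sub_mk]
  -- convexity of d
  have hdconv : ConvexOn ℝ univ d := by
    refine ⟨convex_univ, fun x _ y _ a b ha hb hab => ?_⟩
    simp only [smul_eq_mul]
    refine eps_le fun ε hε => ?_
    obtain ⟨kx, hkx, hx'⟩ := distTo_lt Nq hK2ne x hε
    obtain ⟨ky, hky, hy'⟩ := distTo_lt Nq hK2ne y hε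
    have hk : a • kx + b • ky ∈ K2 := hK2conv hkx hky ha hb hab
    have heq : a • x + b • y - (a • kx + b • ky) = a • (x - kx) + b • (y - ky) := by
      rw [smul_sub, smul_sub]; abel
    have hfin : a * (d x + ε) + b * (d y + ε) = a * d x + b * d y + ε := by
      have : a * (d x + ε) + b * (d y + ε) = a * d x + b * d y + (a + b) * ε := by ring
      rw [this, hab, one_mul]
    calc d (a • x + b • y) ≤ Nq (a • x + b • y - (a • kx + b • ky)) := distTo_le Nq hN0 hk _
      _ = Nq (a • (x - kx) + b • (y - ky)) := by rw [heq]
      _ ≤ Nq (a • (x - kx)) + Nq (b • (y - ky)) := hNtri _ _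
      _ = a * Nq (x - kx) + b * Nq (y - ky) := by rw [hNsmul a ha, hNsmul b hb]
      _ ≤ a * (d x + ε) + b * (d y + ε) :=
          add_le_add (mul_le_mul_of_nonneg_left hx'.le ha)
            (mul_le_mul_of_nonneg_left hy'.le hb)
      _ = a * d x + b * d y + ε := hfin
  -- the envelope
  set g : EuclideanSpace ℝ (Fin m) × EuclideanSpace ℝ (Fin m) → ℝ := fun z => d z ^ p with hg
  have hgconv : ConvexOn ℝ univ g := by
    refine ⟨convex_univ, fun x _ y _ a b ha hb hab => ?_⟩
    simp only [smul_eq_mul, hg]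
    calc d (a • x + b • y) ^ p ≤ (a * d x + b * d y) ^ p := by
          refine Real.rpow_le_rpow (hd0 _) ?_ hp0
          simpa [smul_eq_mul] using hdconv.2 (mem_univ x) (mem_univ y) ha hb hab
      _ ≤ a * d x ^ p + b * d y ^ p := by
          simpa [smul_eq_mul] using
            (convexOn_rpow hp).2 (mem_Ici.mpr (hd0 x)) (mem_Ici.mpr (hd0 y)) ha hb hab
  -- slices of convex functions are convex
  have hslice : ∀ f : EuclideanSpace ℝ (Fin m) × EuclideanSpace ℝ (Fin m) → ℝ,
      ConvexOn ℝ univ f → SepConvexFn f := by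
    intro f hf
    constructor
    · intro ξ
      refine ⟨convex_univ, fun x _ y _ a b ha hb hab => ?_⟩
      have h1 := hf.2 (mem_univ ((ξ : EuclideanSpace ℝ (Fin m)), x)) (mem_univ (ξ, y)) ha hb hab
      have hxy : a • ((ξ : EuclideanSpace ℝ (Fin m)), x) + b • (ξ, y) = (ξ, a • x + b • y) := by
        rw [Prod.smul_mk, Prod.smul_mk, Prod.mk_add_mk]
        congr 1
        rw [← add_smul, hab, one_smul]
      rwa [hxy] at h1
    · intro ζ
      refine ⟨convex_univ, fun x _ y _ a b ha hb hab => ?_⟩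
      have h1 := hf.2 (mem_univ ((x : EuclideanSpace ℝ (Fin m)), ζ)) (mem_univ (y, ζ)) ha hb hab
      have hxy : a • ((x : EuclideanSpace ℝ (Fin m)), ζ) + b • (y, ζ) = (a • x + b • y, ζ) := by
        rw [Prod.smul_mk, Prod.smul_mk, Prod.mk_add_mk]
        congr 1
        rw [← add_smul, hab, one_smul]
      rwa [hxy] at h1
  have hgleW : g ≤ W := by
    intro z
    rw [hW z]
    exact Real.rpow_le_rpow (hd0 z) (hdled z) hp0
  -- maximality among separately convex functions below W
  have hmax : ∀ h : EuclideanSpace ℝ (Fin m) × EuclideanSpace ℝ (Fin m) → ℝ,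
      SepConvexFn h → h ≤ W → h ≤ g := by
    intro h hh hhW z
    obtain ⟨ξ, ζ⟩ := z
    show h (ξ, ζ) ≤ d (ξ, ζ) ^ p
    have hbound : ∀ ε : ℝ, 0 < ε → h (ξ, ζ) ≤ (d (ξ, ζ) + ε) ^ p := by
      intro ε hε
      obtain ⟨k, hkmem, hklt⟩ := distTo_lt Nq hK2ne (ξ, ζ) hε
      obtain ⟨ξ', ζ'⟩ := k
      obtain ⟨hξ', hζ'⟩ := hkmem
      set u := ξ - ξ' with hu
      set w := ζ - ζ' with hwdef
      have hNk : Nq (u, w) < d (ξ, ζ) + ε := by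
        rw [Prod.mk_sub_mk] at hklt; exact hklt
      have key : ∀ α ∈ A, ∀ β ∈ A, h (α + u, β + w) ≤ Nq (u, w) ^ p := by
        intro α hα β hβ
        have h1 : dW (α + u, β + w) ≤ Nq (u, w) := by
          have h2 := distTo_le Nq hN0
            (show ((α : EuclideanSpace ℝ (Fin m)), β) ∈ AA from ⟨hα, hβ⟩) (α + u, β + w)
          simpa [Prod.mk_sub_mk, add_sub_cancel_left] using h2
        calc h (α + u, β + w) ≤ W (α + u, β + w) := hhW _
          _ = dW (α + u, β + w) ^ p := hW _
          _ ≤ Nq (u, w) ^ p := Real.rpow_le_rpow (hdW0 _) h1 hp0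
      rw [hC, convexHull_eq] at hξ' hζ'
      obtain ⟨ι, t, ws, zs, hws0, hws1, hzsA, hzc⟩ := hξ'
      obtain ⟨ι', s, vs, ys, hvs0, hvs1, hysA, hyc⟩ := hζ'
      have hξeq : t.centerMass ws (fun i => zs i + u) = ξ := by
        rw [centerMass_add_const t ws zs u hws1, hzc, hu]; abel
      have hζeq : s.centerMass vs (fun j => ys j + w) = ζ := by
        rw [centerMass_add_const s vs ys w hvs1, hyc, hwdef]; abel
      have step2 : ∀ i ∈ t, h (zs i + u, ζ) ≤ Nq (u, w) ^ p := by
        intro i hi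
        have hJ := (hh.1 (zs i + u)).map_centerMass_le (t := s) (w := vs)
          (p := fun j => ys j + w) hvs0 (by rw [hvs1]; exact one_pos) (fun _ _ => mem_univ _)
        rw [hζeq] at hJ
        refine hJ.trans ?_
        refine centerMass_le_of_le s vs _ hvs0 hvs1 ?_
        intro j hj
        exact key (zs i) (hzsA i hi) (ys j) (hysA j hj)
      have hT := (hh.2 ζ).map_centerMass_le (t := t) (w := ws)
        (p := fun i => zs i + u) hws0 (by rw [hws1]; exact one_pos) (fun _ _ => mem_univ _)
      rw [hξeq] at hT
      have hfin : h (ξ, ζ) ≤ Nq (u, w) ^ p := by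
        refine hT.trans ?_
        exact centerMass_le_of_le t ws _ hws0 hws1 step2
      exact hfin.trans (Real.rpow_le_rpow (hN0 _) hNk.le hp0)
    -- pass to the limit ε → 0⁺
    have hcont : ContinuousAt (fun t : ℝ => t ^ p) (d (ξ, ζ)) :=
      Real.continuousAt_rpow_const _ _ (Or.inr hp0)
    have h1 : Filter.Tendsto (fun ε : ℝ => d (ξ, ζ) + ε) (nhdsWithin 0 (Ioi 0))
        (nhds (d (ξ, ζ))) := by
      have h2 : Filter.Tendsto (fun ε : ℝ => d (ξ, ζ) + ε) (nhds 0) (nhds (d (ξ, ζ) + 0)) :=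
        (continuous_const.add continuous_id).tendsto 0
      rw [add_zero] at h2
      exact h2.mono_left nhdsWithin_le_nhds
    have htends : Filter.Tendsto (fun ε : ℝ => (d (ξ, ζ) + ε) ^ p) (nhdsWithin 0 (Ioi 0))
        (nhds (d (ξ, ζ) ^ p)) := hcont.tendsto.comp h1
    refine ge_of_tendsto htends ?_
    filter_upwards [self_mem_nhdsWithin] with ε hε
    exact hbound ε hε
  -- assemble
  refine ⟨g, ⟨hslice g hgconv, hgleW, hmax⟩,
    ⟨hgconv, hgleW, fun h hconv hhW => hmax h (hslice h hconv) hhW⟩, ?_, ?_, ?_, ?_⟩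
  · intro ξ ζ hξ hζ
    show d (ξ, ζ) ^ p = 0
    rw [hdzero ξ ζ hξ hζ, Real.zero_rpow hp0']
  · intro ξ ζ hξ hζ
    show d (ξ, ζ) ^ p = W (ξ, ζ)
    rw [hW, hdout ξ ζ hξ hζ]
  · intro ξ ζ α hξ hζ hα
    show d (ξ, ζ) ^ p = W (α, ζ)
    rw [hW, hdmixd ξ ζ hξ hζ, hdWmix α ζ hα]
  · intro ξ ζ β hξ hζ hβ
    show d (ξ, ζ) ^ p = W (ξ, β)
    rw [hW, hdmixd' ξ ζ hξ hζ, hdWmix' ξ β hβ]
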